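/- Let a₁ > a₂ > 0, let η ⊆ ℤ^d be a union of hypercubes, let z ∈ ℤ^d, and suppose H_{z − e_j} ⊆ η for j = 1, 2, …, d, where e_j denotes the j-th standard basis vector of ℤ^d. Then for every n = 1, 2, …, d+1, the set 2z + {x ∈ {0,1}^d : x₁ + x₂ + ⋯ + x_d < n} is contained in the n-th iterate Φⁿ(η) of the best-response map. -/

import Mathlib

/-- Two sites of `ℤᵈ` are neighbors iff their `ℓ¹`-distance equals `1`. -/
def Neighbor (d : ℕ) (x y : Fin d → ℤ) : Prop :=
  (∑ i, (x i - y i).natAbs) = 1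

/-- Number of neighbors of `x` following strategy 1 (i.e. belonging to `η`). -/
noncomputable def N1 (d : ℕ) (η : Set (Fin d → ℤ)) (x : Fin d → ℤ) : ℕ :=
  Set.ncard {y | Neighbor d x y ∧ y ∈ η}

/-- Number of neighbors of `x` following strategy 2 (i.e. not belonging to `η`). -/
noncomputable def N2 (d : ℕ) (η : Set (Fin d → ℤ)) (x : Fin d → ℤ) : ℕ :=
  Set.ncard {y | Neighbor d x y ∧ y ∉ η}

/-- The best-response map on configurations. -/
def Phi (d : ℕ) (a₁ a₂ : ℝ) (η : Set (Fin d → ℤ)) : Set (Fin d → ℤ) :=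
  {x | a₁ * (N1 d η x : ℝ) > a₂ * (N2 d η x : ℝ) ∨
    (x ∈ η ∧ a₁ * (N1 d η x : ℝ) = a₂ * (N2 d η x : ℝ))}

/-- The hypercube `H_z = 2z + {0,1}^d`. -/
def Hcube (d : ℕ) (z : Fin d → ℤ) : Set (Fin d → ℤ) :=
  {x | ∀ i, x i = 2 * z i ∨ x i = 2 * z i + 1}

/-- A configuration is a union of hypercubes if it is `⋃_{z ∈ S} H_z` for some `S ⊆ ℤᵈ`. -/
def IsUnionOfHypercubes (d : ℕ) (η : Set (Fin d → ℤ)) : Prop :=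
  ∃ S : Set (Fin d → ℤ), η = ⋃ z ∈ S, Hcube d z

lemma sum_single {d : ℕ} (i : Fin d) (c : ℤ) : ∑ j, Pi.single i c j = c := by
  simp [Pi.single_apply, Finset.sum_ite_eq' Finset.univ i]

lemma neighbor_shift {d : ℕ} (x : Fin d → ℤ) (i : Fin d) (c : ℤ)
    (hc : c = 1 ∨ c = -1) : Neighbor d x (x - Pi.single i c) := by
  unfold Neighbor
  have h : ∀ j, (x j - (x - (Pi.single i c : Fin d → ℤ)) j).natAbs
      = if j = i then c.natAbs else 0 := by
    intro j
    rw [Pi.sub_apply, sub_sub_cancel, Pi.single_apply]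
    split <;> simp
  simp only [h]
  rw [Finset.sum_ite_eq' Finset.univ i]
  rcases hc with h | h <;> simp [h]

lemma neighbor_cases {d : ℕ} {x y : Fin d → ℤ} (h : Neighbor d x y) :
    ∃ i, y = x - Pi.single i 1 ∨ y = x + Pi.single i 1 := by
  obtain ⟨i, -, hi⟩ := Finset.exists_ne_zero_of_sum_ne_zero (by rw [h]; exact one_ne_zero)
  have hi' : (x i - y i).natAbs ≠ 0 := hi
  have hle := Finset.single_le_sum (f := fun j => (x j - y j).natAbs)
    (fun j _ => Nat.zero_le _) (Finset.mem_univ i)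
  rw [h] at hle
  have hle' : (x i - y i).natAbs ≤ 1 := hle
  have h1 : (x i - y i).natAbs = 1 := by omega
  have h0 : ∀ j, j ≠ i → x j = y j := by
    intro j hj
    have hadd := Finset.add_sum_erase Finset.univ (fun j => (x j - y j).natAbs)
      (Finset.mem_univ i)
    rw [h] at hadd
    have hadd' : (x i - y i).natAbs + ∑ k ∈ Finset.univ.erase i, (x k - y k).natAbs = 1 :=
      hadd
    have hrest : ∑ k ∈ Finset.univ.erase i, (x k - y k).natAbs = 0 := by omega
    have h2 : (x j - y j).natAbs = 0 :=
      Finset.sum_eq_zero_iff.mp hrest j (Finset.mem_erase.mpr ⟨hj, Finset.mem_univ j⟩)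
    omega
  refine ⟨i, ?_⟩
  rcases Int.natAbs_eq_iff.mp h1 with h' | h'
  · left; funext j
    rw [Pi.sub_apply, Pi.single_apply]
    by_cases hj : j = i
    · subst hj; rw [if_pos rfl]; omega
    · rw [if_neg hj, sub_zero]; exact (h0 j hj).symm
  · right; funext j
    rw [Pi.add_apply, Pi.single_apply]
    by_cases hj : j = i
    · subst hj; rw [if_pos rfl]; omega
    · rw [if_neg hj, add_zero]; exact (h0 j hj).symm

lemma neighbor_finite {d : ℕ} (x : Fin d → ℤ) : {y | Neighbor d x y}.Finite := by
  apply ((Set.finite_range (fun i : Fin d => x - Pi.single i (1:ℤ))).union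
    (Set.finite_range (fun i : Fin d => x + Pi.single i (1:ℤ)))).subset
  intro y hy
  obtain ⟨i, h | h⟩ := neighbor_cases hy
  · exact Or.inl ⟨i, h.symm⟩
  · exact Or.inr ⟨i, h.symm⟩

lemma mem_phi_core {d : ℕ} (hd : 1 ≤ d) {a₁ a₂ : ℝ} (ha : a₁ > a₂) (ha₂ : 0 < a₂)
    {ξ : Set (Fin d → ℤ)} {x : Fin d → ℤ} {ε : Fin d → ℤ}
    (hε : ∀ i, ε i = 1 ∨ ε i = -1)
    (hmem : ∀ i, x - Pi.single i (ε i) ∈ ξ) :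
    x ∈ Phi d a₁ a₂ ξ := by
  set g : Fin d → (Fin d → ℤ) := fun i => x - Pi.single i (ε i) with hg
  set u : Fin d → (Fin d → ℤ) := fun i => x + Pi.single i (ε i) with hu
  have hεne : ∀ i, ε i ≠ 0 := fun i => by rcases hε i with h | h <;> simp [h]
  have hginj : Function.Injective g := by
    intro i j hij
    by_contra hne
    have h2 : (x - Pi.single i (ε i) : Fin d → ℤ) i
        = (x - Pi.single j (ε j) : Fin d → ℤ) i := congrFun hij i
    rw [Pi.sub_apply, Pi.sub_apply, Pi.single_apply, Pi.single_apply,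
      if_pos rfl, if_neg hne] at h2
    exact hεne i (by omega)
  -- every neighbor is in range g ∪ range u
  have hnbr : ∀ y, Neighbor d x y → y ∈ Set.range g ∪ Set.range u := by
    intro y hy
    obtain ⟨i, h | h⟩ := neighbor_cases hy
    · rcases hε i with hε1 | hε1
      · exact Or.inl ⟨i, show x - Pi.single i (ε i) = y by rw [hε1, h]⟩
      · refine Or.inr ⟨i, show x + Pi.single i (ε i) = y by
          rw [hε1, h]; funext j
          simp only [Pi.add_apply, Pi.sub_apply, Pi.single_apply]
          split <;> ring⟩
    · rcases hε i with hε1 | hε1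
      · exact Or.inr ⟨i, show x + Pi.single i (ε i) = y by rw [hε1, h]⟩
      · refine Or.inl ⟨i, show x - Pi.single i (ε i) = y by
          rw [hε1, h]; funext j
          simp only [Pi.sub_apply, Pi.add_apply, Pi.single_apply]
          split <;> ring⟩
  have hrangecard : (Set.range g).ncard = d := by
    rw [← Set.image_univ, Set.ncard_image_of_injective _ hginj, Set.ncard_univ,
      Nat.card_eq_fintype_card, Fintype.card_fin]
  have hN1 : d ≤ N1 d ξ x := by
    have hsub : Set.range g ⊆ {y | Neighbor d x y ∧ y ∈ ξ} := by
      rintro _ ⟨i, rfl⟩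
      exact ⟨neighbor_shift x i (ε i) (hε i), hmem i⟩
    have hfin : {y | Neighbor d x y ∧ y ∈ ξ}.Finite :=
      (neighbor_finite x).subset (fun y hy => hy.1)
    have := Set.ncard_le_ncard hsub hfin
    rw [hrangecard] at this
    exact this
  have hN2 : N2 d ξ x ≤ d := by
    have hsub : {y | Neighbor d x y ∧ y ∉ ξ} ⊆ Set.range u := by
      rintro y ⟨hn, hyξ⟩
      rcases hnbr y hn with h | h
      · obtain ⟨i, rfl⟩ := h
        exact absurd (hmem i) hyξ
      · exact h
    have := Set.ncard_le_ncard hsub (Set.finite_range u)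
    refine this.trans ?_
    calc (Set.range u).ncard ≤ (Finset.univ.image u).card := by
          rw [← Set.ncard_coe_finset]
          apply Set.ncard_le_ncard _ (Finset.univ.image u).finite_toSet
          intro y ⟨i, hi⟩
          simp only [Finset.coe_image, Finset.coe_univ, Set.image_univ]
          exact ⟨i, hi⟩
      _ ≤ d := (Finset.card_image_le).trans (by simp)
  left
  have h1 : (d : ℝ) ≤ (N1 d ξ x : ℝ) := by exact_mod_cast hN1
  have h2 : ((N2 d ξ x : ℝ)) ≤ d := by exact_mod_cast hN2
  have h3 : (1 : ℝ) ≤ d := by exact_mod_cast hd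
  nlinarith

lemma phi_mono {d : ℕ} {a₁ a₂ : ℝ} (ha₁ : 0 < a₁) (ha₂ : 0 < a₂)
    {ξ ξ' : Set (Fin d → ℤ)} (h : ξ ⊆ ξ') :
    Phi d a₁ a₂ ξ ⊆ Phi d a₁ a₂ ξ' := by
  intro x hx
  have hf1 : {y | Neighbor d x y ∧ y ∈ ξ'}.Finite :=
    (neighbor_finite x).subset (fun y hy => hy.1)
  have hf2 : {y | Neighbor d x y ∧ y ∉ ξ}.Finite :=
    (neighbor_finite x).subset (fun y hy => hy.1)
  have hN1 : N1 d ξ x ≤ N1 d ξ' x :=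
    Set.ncard_le_ncard (fun y hy => ⟨hy.1, h hy.2⟩) hf1
  have hN2 : N2 d ξ' x ≤ N2 d ξ x :=
    Set.ncard_le_ncard (fun y hy => ⟨hy.1, fun c => hy.2 (h c)⟩) hf2
  have c1 : (N1 d ξ x : ℝ) ≤ N1 d ξ' x := by exact_mod_cast hN1
  have c2 : (N2 d ξ' x : ℝ) ≤ N2 d ξ x := by exact_mod_cast hN2
  rcases hx with h1 | ⟨hxξ, heq⟩
  · left
    calc a₂ * (N2 d ξ' x : ℝ) ≤ a₂ * (N2 d ξ x : ℝ) := by nlinarith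
      _ < a₁ * (N1 d ξ x : ℝ) := h1
      _ ≤ a₁ * (N1 d ξ' x : ℝ) := by nlinarith
  · have hle : a₂ * (N2 d ξ' x : ℝ) ≤ a₁ * (N1 d ξ' x : ℝ) := by nlinarith
    rcases lt_or_eq_of_le hle with hlt | heq'
    · left; exact hlt
    · right; exact ⟨h hxξ, heq'.symm⟩

set_option maxHeartbeats 1000000 in
/-- If `a₁ > a₂ > 0`, `η` is a union of hypercubes, and the `d` hypercubes `H_{z - e_j}`
(`j = 1, …, d`) are contained in `η`, then for every `n = 1, …, d+1` the set
`2z + {x ∈ {0,1}^d : x₁ + ⋯ + x_d < n}` is contained in `Φⁿ(η)`. -/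
theorem corner_growth (d : ℕ) (hd : 1 ≤ d) (a₁ a₂ : ℝ)
    (ha : a₁ > a₂) (ha₂ : 0 < a₂)
    (η : Set (Fin d → ℤ)) (hη : IsUnionOfHypercubes d η) (z : Fin d → ℤ)
    (hadj : ∀ j : Fin d, Hcube d (z - Pi.single j 1) ⊆ η) :
    ∀ n : ℕ, 1 ≤ n → n ≤ d + 1 →
      {y : Fin d → ℤ | (∀ i, y i = 2 * z i ∨ y i = 2 * z i + 1) ∧
          (∑ i, (y i - 2 * z i)) < (n : ℤ)} ⊆ (Phi d a₁ a₂)^[n] η := by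
  obtain ⟨S, hS⟩ := hη
  set A : ℕ → Set (Fin d → ℤ) := fun m =>
    {y | (∀ i, y i = 2 * z i ∨ y i = 2 * z i + 1) ∧ (∑ i, (y i - 2 * z i)) < (m : ℤ)}
    with hA
  -- points of η have all in-cube shifted neighbors in η
  have hcube_mem : ∀ x ∈ η, ∀ ξ : Set (Fin d → ℤ), η ⊆ ξ → x ∈ Phi d a₁ a₂ ξ := by
    intro x hx ξ hξ
    rw [hS] at hx
    obtain ⟨w, hw, hxw⟩ := Set.mem_iUnion₂.mp hx
    refine mem_phi_core hd ha ha₂ (ε := fun i => if x i = 2 * w i then -1 else 1)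
      (fun i => by by_cases h : x i = 2 * w i <;> simp [h]) ?_
    intro i
    apply hξ
    rw [hS]
    refine Set.mem_iUnion₂.mpr ⟨w, hw, ?_⟩
    intro j
    rw [Pi.sub_apply, Pi.single_apply]
    by_cases hji : j = i
    · subst hji
      rcases hxw j with hj | hj <;> simp only [if_pos rfl] <;> split_ifs <;> omega
    · rw [if_neg hji, sub_zero]
      exact hxw j
  -- the key step
  have step : ∀ m : ℕ, η ∪ A (m + 1) ⊆ Phi d a₁ a₂ (η ∪ A m) := by
    intro m x hx
    rcases hx with hx | hx
    · exact hcube_mem x hx _ Set.subset_union_left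
    · obtain ⟨hc, hsum⟩ := hx
      refine mem_phi_core hd ha ha₂ (ε := fun _ => 1) (fun i => Or.inl rfl) ?_
      intro i
      rcases hc i with hi | hi
      · left
        apply hadj i
        intro j
        simp only [Pi.sub_apply, Pi.single_apply]
        by_cases hji : j = i
        · subst hji
          simp only [if_pos rfl]
          omega
        · simp only [if_neg hji, sub_zero, mul_zero]
          rcases hc j with hj | hj <;> omega
      · right
        constructor
        · intro j
          simp only [Pi.sub_apply, Pi.single_apply]
          by_cases hji : j = i
          · subst hji
            simp only [if_pos rfl]
            omega
          · simp only [if_neg hji, sub_zero]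
            exact hc j
        · have hsplit : ∑ j, ((x - Pi.single i 1 : Fin d → ℤ) j - 2 * z j)
              = (∑ j, (x j - 2 * z j)) - 1 := by
            calc ∑ j, ((x - Pi.single i (1:ℤ) : Fin d → ℤ) j - 2 * z j)
                = ∑ j, ((x j - 2 * z j) - (Pi.single i 1 : Fin d → ℤ) j) := by
                  refine Finset.sum_congr rfl (fun j _ => ?_)
                  rw [Pi.sub_apply]; ring
              _ = (∑ j, (x j - 2 * z j)) - ∑ j, (Pi.single i 1 : Fin d → ℤ) j :=
                  Finset.sum_sub_distrib _ _
              _ = (∑ j, (x j - 2 * z j)) - 1 := by rw [sum_single]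
          rw [hsplit]
          push_cast at hsum ⊢
          omega
  -- main induction
  have hmain : ∀ m : ℕ, η ∪ A m ⊆ (Phi d a₁ a₂)^[m] η := by
    intro m
    induction m with
    | zero =>
      simp only [Function.iterate_zero, id_eq]
      rintro x (hx | ⟨hc, hsum⟩)
      · exact hx
      · exfalso
        have : (0:ℤ) ≤ ∑ i, (x i - 2 * z i) :=
          Finset.sum_nonneg (fun i _ => by rcases hc i with h | h <;> omega)
        push_cast at hsum
        omega
    | succ m ih =>
      calc η ∪ A (m + 1) ⊆ Phi d a₁ a₂ (η ∪ A m) := step m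
        _ ⊆ Phi d a₁ a₂ ((Phi d a₁ a₂)^[m] η) := phi_mono (lt_trans ha₂ ha) ha₂ ih
        _ = (Phi d a₁ a₂)^[m+1] η := (Function.iterate_succ_apply' _ _ _).symm
  intro n hn1 hn2 y hy
  exact hmain n (Or.inr hy)
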